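/- Fix an integer n ≥ 1, set N = 2n + 3, and let V, the Verlinde product, and the structure constants N_{ab}^c be as defined. Then the ℤ-bilinear product ∗ on V determined by e_a ∗ e_b = Σ_{c=0}^{n} |N_{ab}^c| e_c (replacing each structure constant by its absolute value) is commutative and associative, with identity element e₀. -/

import Mathlib

open BigOperators

/-- The folding map `F : ℕ → V` for type `A₂⁽²⁾` at level `2n`, where
`V = Fin (n+1) → ℤ` is the free ℤ-module with basis `e₀, …, e_n` and
`N = 2n + 3`:  `F m = e_{m'}` if `m ≡ m' (mod N)` with `0 ≤ m' ≤ n`;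
`F m = 0` if `m ≡ N - 1 (mod N)`; `F m = -e_{m'}` if `m + m' + 2 ≡ 0 (mod N)`
with `0 ≤ m' ≤ n`. -/
def foldA2 (n m : ℕ) : Fin (n + 1) → ℤ :=
  if h : m % (2 * n + 3) ≤ n then
    Pi.single (⟨m % (2 * n + 3), by omega⟩ : Fin (n + 1)) 1
  else if h2 : m % (2 * n + 3) = 2 * n + 2 then 0
  else - Pi.single (⟨2 * n + 1 - m % (2 * n + 3), by omega⟩ : Fin (n + 1)) 1

/-- The basis vector `e_m` of `V = Fin (n+1) → ℤ` (zero if `m > n`). -/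
def eN (n m : ℕ) : Fin (n + 1) → ℤ :=
  if h : m ≤ n then Pi.single (⟨m, by omega⟩ : Fin (n + 1)) 1 else 0

/-- The Verlinde product on `V = Fin (n+1) → ℤ`: the ℤ-bilinear product with
`e_a · e_b = ∑_{i=0}^{min a b} F (a + b - 2 i)`. -/
def vmul (n : ℕ) (x y : Fin (n + 1) → ℤ) : Fin (n + 1) → ℤ :=
  fun c => ∑ a : Fin (n + 1), ∑ b : Fin (n + 1),
    x a * y b * (∑ i ∈ Finset.range (min a.1 b.1 + 1), foldA2 n (a.1 + b.1 - 2 * i)) c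

/-- The structure constants `N_{ab}^c` of the Verlinde product, defined by
`e_a · e_b = ∑_c N_{ab}^c e_c`. -/
def Nconst (n a b c : ℕ) : ℤ :=
  if h : c ≤ n then vmul n (eN n a) (eN n b) ⟨c, by omega⟩ else 0

/-- The ℤ-bilinear product on `V = Fin (n+1) → ℤ` whose structure constants are
the absolute values `|N_{ab}^c|` of the Verlinde structure constants. -/
def vmulAbs (n : ℕ) (x y : Fin (n + 1) → ℤ) : Fin (n + 1) → ℤ :=
  fun c => ∑ a : Fin (n + 1), ∑ b : Fin (n + 1), x a * y b * |Nconst n a.1 b.1 c.1|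


namespace VerlA2

/-- odd folding function on residues `0..2n+2`. -/
def hAux (n r : ℕ) : Fin (n + 1) → ℤ :=
  if h1 : r = 0 then 0
  else if h2 : r ≤ n + 1 then Pi.single (⟨r - 1, by omega⟩ : Fin (n + 1)) 1
  else if h3 : r ≤ 2 * n + 2 then - Pi.single (⟨2 * n + 2 - r, by omega⟩ : Fin (n + 1)) 1
  else 0

def hfun (n : ℕ) (k : ℤ) : Fin (n + 1) → ℤ := hAux n (k % (2 * (n : ℤ) + 3)).toNat

lemma Mpos (n : ℕ) : (0 : ℤ) < 2 * (n : ℤ) + 3 := by positivity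

lemma emod_nonneg' (n : ℕ) (k : ℤ) : 0 ≤ k % (2 * (n : ℤ) + 3) :=
  Int.emod_nonneg k (Mpos n).ne'

lemma emod_lt' (n : ℕ) (k : ℤ) : k % (2 * (n : ℤ) + 3) < 2 * (n : ℤ) + 3 :=
  Int.emod_lt_of_pos k (Mpos n)

lemma hfun_add_mul (n : ℕ) (k q : ℤ) :
    hfun n (k + (2 * (n : ℤ) + 3) * q) = hfun n k := by
  unfold hfun
  rw [Int.add_mul_emod_self_left]

lemma hfun_emod_add (n : ℕ) (k t : ℤ) :
    hfun n (k + t) = hfun n (k % (2 * (n : ℤ) + 3) + t) := by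
  conv_lhs => rw [show k + t = (k % (2 * (n : ℤ) + 3) + t) + (2 * (n : ℤ) + 3) * (k / (2 * (n : ℤ) + 3)) by
    rw [Int.emod_def]; ring]
  exact hfun_add_mul n _ _

lemma hAux_rev (n r : ℕ) (h1 : 1 ≤ r) (h2 : r ≤ 2 * n + 2) :
    hAux n (2 * n + 3 - r) = - hAux n r := by
  unfold hAux
  rcases le_or_gt r (n + 1) with hr | hr
  · rw [dif_neg (by omega), dif_neg (by omega), dif_pos (by omega),
      dif_neg (by omega), dif_pos (by omega)]
    simp only [show 2 * n + 2 - (2 * n + 3 - r) = r - 1 from by omega]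
  · rw [dif_neg (by omega), dif_pos (by omega), dif_neg (by omega),
      dif_neg (by omega), dif_pos (by omega), neg_neg]
    simp only [show 2 * n + 3 - r - 1 = 2 * n + 2 - r from by omega]

lemma hfun_neg (n : ℕ) (k : ℤ) : hfun n (-k) = - hfun n k := by
  set M : ℤ := 2 * (n : ℤ) + 3 with hM
  have h0 : 0 ≤ k % M := emod_nonneg' n k
  have h1 : k % M < M := emod_lt' n k
  rcases eq_or_lt_of_le h0 with hz | hpos
  · -- k % M = 0
    have hdvd : M ∣ k := Int.dvd_of_emod_eq_zero hz.symm
    have hz2 : (-k) % M = 0 := Int.emod_eq_zero_of_dvd (by exact dvd_neg.mpr hdvd)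
    unfold hfun
    rw [← hM, hz2, show k % M = 0 from hz.symm]
    simp [hAux]
  · have hneg : (-k) % M = M - k % M := by
      have : -k = (M - k % M) + M * (-(k / M) - 1) := by
        rw [Int.emod_def]; ring
      rw [this, Int.add_mul_emod_self_left, Int.emod_eq_of_lt (by omega) (by omega)]
    unfold hfun
    rw [← hM, hneg]
    have hr : (M - k % M).toNat = 2 * n + 3 - (k % M).toNat := by omega
    have hr2 : (k % M).toNat ≤ 2 * n + 2 := by omega
    have hr1 : 1 ≤ (k % M).toNat := by omega
    rw [hr]
    exact hAux_rev n _ hr1 hr2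


lemma oddsum (n L : ℕ) :
    ∑ j ∈ Finset.range (L + 1), hfun n ((L : ℤ) - 2 * j) = 0 := by
  have h := Finset.sum_range_reflect (fun j => hfun n ((L : ℤ) - 2 * j)) (L + 1)
  have h2 : ∀ j ∈ Finset.range (L + 1),
      hfun n ((L : ℤ) - 2 * ((L + 1 - 1 - j : ℕ) : ℤ))
        = - hfun n ((L : ℤ) - 2 * j) := by
    intro j hj
    rw [Finset.mem_range] at hj
    rw [show ((L + 1 - 1 - j : ℕ) : ℤ) = (L : ℤ) - j by omega]
    rw [show (L : ℤ) - 2 * ((L : ℤ) - j) = -((L : ℤ) - 2 * j) by ring]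
    exact hfun_neg n _
  rw [Finset.sum_congr rfl h2] at h
  rw [Finset.sum_neg_distrib] at h
  -- h : -S = S
  have := h.symm
  funext c
  have hc := congrFun h c
  simp only [Pi.neg_apply, Finset.sum_apply, Pi.zero_apply] at hc ⊢
  omega

/-- `foldA2` is `hfun` shifted by one. -/
lemma fold_eq (n m : ℕ) : foldA2 n m = hfun n ((m : ℤ) + 1) := by
  have hcast : ((m : ℤ) + 1) = (((m + 1 : ℕ) : ℤ)) := by push_cast; ring
  have htn : (((m + 1 : ℕ) : ℤ) % (2 * (n : ℤ) + 3)).toNat = (m + 1) % (2 * n + 3) := by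
    have := Int.natCast_mod (m + 1) (2 * n + 3)
    have h2 : ((2 * n + 3 : ℕ) : ℤ) = 2 * (n : ℤ) + 3 := by push_cast; ring
    rw [h2] at this
    rw [← this]
    exact Int.toNat_natCast _
  unfold hfun
  rw [hcast, htn]
  set r := m % (2 * n + 3) with hr
  have hrlt : r < 2 * n + 3 := Nat.mod_lt _ (by omega)
  have hm1 : (m + 1) % (2 * n + 3) = if r = 2 * n + 2 then 0 else r + 1 := by
    have : (m + 1) % (2 * n + 3) = (r + 1) % (2 * n + 3) := by
      rw [Nat.add_mod, Nat.mod_eq_of_lt (show 1 < 2 * n + 3 by omega), ← hr]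
    rw [this]
    split_ifs with h
    · rw [h]; simp [Nat.mod_self, show 2 * n + 2 + 1 = 2 * n + 3 from by omega]
    · exact Nat.mod_eq_of_lt (by omega)
  rw [hm1]
  rcases le_or_gt r n with h1 | h1
  · rw [if_neg (show ¬ r = 2 * n + 2 by omega)]
    unfold foldA2 hAux
    rw [dif_pos (show m % (2 * n + 3) ≤ n by omega), dif_neg (show ¬ r + 1 = 0 by omega),
      dif_pos (show r + 1 ≤ n + 1 by omega)]
    simp only [show r + 1 - 1 = r from by omega, ← hr]
  · rcases eq_or_ne r (2 * n + 2) with h2 | h2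
    · rw [if_pos h2]
      unfold foldA2 hAux
      rw [dif_neg (show ¬ m % (2 * n + 3) ≤ n by omega),
        dif_pos (show m % (2 * n + 3) = 2 * n + 2 by omega), dif_pos rfl]
    · rw [if_neg h2]
      unfold foldA2 hAux
      rw [dif_neg (show ¬ m % (2 * n + 3) ≤ n by omega),
        dif_neg (show ¬ m % (2 * n + 3) = 2 * n + 2 by omega),
        dif_neg (show ¬ r + 1 = 0 by omega),
        dif_neg (show ¬ r + 1 ≤ n + 1 by omega),
        dif_pos (show r + 1 ≤ 2 * n + 2 by omega)]
      simp only [show 2 * n + 2 - (r + 1) = 2 * n + 1 - r from by omega, ← hr]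


/-- Verlinde kernel `e_a · e_b` (as element of V). -/
def ker (n a b : ℕ) : Fin (n + 1) → ℤ :=
  ∑ i ∈ Finset.range (min a b + 1), foldA2 n (a + b - 2 * i)

/-- kernel in `hfun` form with range `b+1`. -/
def Kint (n a b : ℕ) : Fin (n + 1) → ℤ :=
  ∑ i ∈ Finset.range (b + 1), hfun n ((a : ℤ) + b + 1 - 2 * i)

lemma ker_comm (n a b : ℕ) : ker n a b = ker n b a := by
  unfold ker
  rw [Nat.add_comm a b, Nat.min_comm a b]

lemma ker_eq_min (n a b : ℕ) :
    ker n a b = ∑ i ∈ Finset.range (min a b + 1), hfun n ((a : ℤ) + b + 1 - 2 * i) := by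
  unfold ker
  refine Finset.sum_congr rfl (fun i hi => ?_)
  rw [Finset.mem_range] at hi
  rw [fold_eq]
  congr 1
  have h2 : 2 * i ≤ a + b := by
    rcases Nat.le_total a b with h | h
    · simp [Nat.min_eq_left h] at hi; omega
    · simp [Nat.min_eq_right h] at hi; omega
  push_cast [Nat.cast_sub h2]
  ring

lemma ker_eq_Kint (n a b : ℕ) : ker n a b = Kint n a b := by
  rw [ker_eq_min]
  unfold Kint
  rcases Nat.le_total b a with h | h
  · rw [Nat.min_eq_right h]
  · rw [Nat.min_eq_left h]
    rcases eq_or_lt_of_le h with he | hlt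
    · rw [he]
    · refine Eq.symm ?_
      have hsplit : b + 1 = (a + 1) + (b - a) := by omega
      rw [hsplit, Finset.sum_range_add]
      have hzero : ∑ i ∈ Finset.range (b - a),
          hfun n ((a : ℤ) + b + 1 - 2 * ((a + 1 + i : ℕ) : ℤ)) = 0 := by
        have hL : b - a = (b - a - 1) + 1 := by omega
        rw [hL, ← oddsum n (b - a - 1)]
        refine Finset.sum_congr rfl (fun i hi => ?_)
        rw [Finset.mem_range] at hi
        congr 1
        have : ((b - a - 1 : ℕ) : ℤ) = (b : ℤ) - a - 1 := by omega
        rw [this]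
        push_cast
        ring
      rw [hzero, add_zero]

lemma Kint_comm (n a b : ℕ) : Kint n a b = Kint n b a := by
  rw [← ker_eq_Kint, ← ker_eq_Kint, ker_comm]


lemma key (n : ℕ) (k : ℤ) (c : ℕ) (hc : c ≤ n) :
    ∑ d : Fin (n + 1), hfun n k d • Kint n d.1 c
      = ∑ j ∈ Finset.range (c + 1), hfun n (k + c - 2 * j) := by
  set M : ℤ := 2 * (n : ℤ) + 3 with hM
  have h0 : 0 ≤ k % M := emod_nonneg' n k
  have h1 : k % M < M := emod_lt' n k
  set r : ℕ := (k % M).toNat with hrdef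
  have hrk : k % M = (r : ℤ) := by omega
  have hrlt : r ≤ 2 * n + 2 := by omega
  have hfk : hfun n k = hAux n r := rfl
  have hshift : ∀ j : ℕ, hfun n (k + (c : ℤ) - 2 * j) = hfun n ((r : ℤ) + c - 2 * j) := by
    intro j
    have : k + (c : ℤ) - 2 * j = k + ((c : ℤ) - 2 * j) := by ring
    rw [this, hfun_emod_add, hrk]
    congr 1
    ring
  rw [Finset.sum_congr rfl (fun j _ => hshift j)]
  rcases Nat.eq_zero_or_pos r with hr0 | hrpos
  · -- r = 0 : both sides vanish
    have hzero : hfun n k = 0 := by rw [hfk, hr0]; simp [hAux]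
    rw [Finset.sum_congr rfl (fun d _ => by rw [hzero]; simp : ∀ d ∈ Finset.univ,
      hfun n k d • Kint n d.1 c = 0)]
    rw [Finset.sum_const_zero]
    rw [hr0]
    rw [← oddsum n c]
    refine (Finset.sum_congr rfl (fun j hj => ?_)).symm
    congr 1
    push_cast
    ring
  · rcases le_or_gt r (n + 1) with hr2 | hr2
    · -- hfun k = e_{r-1}
      set d0 : Fin (n + 1) := ⟨r - 1, by omega⟩ with hd0
      have hsingle : hfun n k = Pi.single d0 1 := by
        rw [hfk]
        unfold hAux
        rw [dif_neg (by omega), dif_pos (by omega)]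
      rw [hsingle]
      rw [Finset.sum_eq_single d0 (fun d _ hd => by
          rw [Pi.single_eq_of_ne hd, zero_smul]) (by simp)]
      rw [Pi.single_eq_same, one_smul]
      unfold Kint
      refine Finset.sum_congr rfl (fun j hj => ?_)
      congr 1
      have : ((d0.1 : ℕ) : ℤ) = (r : ℤ) - 1 := by
        simp [hd0]
        omega
      rw [this]
      ring
    · -- hfun k = - e_{2n+2-r}
      set d0 : Fin (n + 1) := ⟨2 * n + 2 - r, by omega⟩ with hd0
      have hsingle : hfun n k = - Pi.single d0 1 := by
        rw [hfk]
        unfold hAux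
        rw [dif_neg (by omega), dif_neg (by omega), dif_pos (by omega)]
      rw [hsingle]
      rw [Finset.sum_eq_single d0 (fun d _ hd => by
          simp only [Pi.neg_apply]
          rw [Pi.single_eq_of_ne hd, neg_zero, zero_smul]) (by simp)]
      simp only [Pi.neg_apply, Pi.single_eq_same]
      rw [show (-(1:ℤ)) • Kint n d0.1 c = - Kint n d0.1 c by simp]
      -- RHS: ∑_j hfun (r + c - 2j) = - Kint d0 c
      have hterm : ∀ j : ℕ, hfun n ((r : ℤ) + c - 2 * j)
          = - hfun n ((d0.1 : ℤ) + 1 - c + 2 * j) := by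
        intro j
        have hd0v : ((d0.1 : ℕ) : ℤ) = 2 * (n : ℤ) + 2 - r := by
          simp [hd0]; omega
        have harg : (r : ℤ) + c - 2 * j
            = (-(((d0.1 : ℕ) : ℤ) + 1 - c + 2 * j)) + M * 1 := by
          rw [hd0v, hM]; ring
        rw [harg, hfun_add_mul, hfun_neg]
      rw [Finset.sum_congr rfl (fun j _ => hterm j), Finset.sum_neg_distrib]
      congr 1
      -- ∑_j hfun (d0+1-c+2j) = Kint d0 c  (by reflection)
      have hrefl := Finset.sum_range_reflect
        (fun j => hfun n ((d0.1 : ℤ) + 1 - c + 2 * j)) (c + 1)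
      rw [← hrefl]
      unfold Kint
      refine Finset.sum_congr rfl (fun j hj => ?_)
      rw [Finset.mem_range] at hj
      congr 1
      have : ((c + 1 - 1 - j : ℕ) : ℤ) = (c : ℤ) - j := by omega
      rw [this]
      ring


lemma triple (n a b e : ℕ) (he : e ≤ n) :
    ∑ d : Fin (n + 1), Kint n a b d • Kint n d.1 e
      = ∑ i ∈ Finset.range (b + 1), ∑ j ∈ Finset.range (e + 1),
          hfun n ((a : ℤ) + b + e + 1 - 2 * i - 2 * j) := by
  have step1 : ∀ d : Fin (n + 1), Kint n a b d • Kint n d.1 e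
      = ∑ i ∈ Finset.range (b + 1), hfun n ((a : ℤ) + b + 1 - 2 * i) d • Kint n d.1 e := by
    intro d
    rw [show Kint n a b d = ∑ i ∈ Finset.range (b + 1),
      hfun n ((a : ℤ) + b + 1 - 2 * i) d from by rw [Kint, Finset.sum_apply]]
    rw [Finset.sum_smul]
  rw [Finset.sum_congr rfl (fun d _ => step1 d), Finset.sum_comm]
  refine Finset.sum_congr rfl (fun i hi => ?_)
  rw [key n ((a : ℤ) + b + 1 - 2 * i) e he]
  refine Finset.sum_congr rfl (fun j hj => ?_)
  congr 1
  ring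

lemma kassoc (n a b e : ℕ) (ha : a ≤ n) (he : e ≤ n) :
    ∑ d : Fin (n + 1), Kint n a b d • Kint n d.1 e
      = ∑ d : Fin (n + 1), Kint n b e d • Kint n a d.1 := by
  have lhs : ∑ d : Fin (n + 1), Kint n a b d • Kint n d.1 e
      = ∑ d : Fin (n + 1), Kint n b a d • Kint n d.1 e := by
    rw [Kint_comm]
  have rhs : ∑ d : Fin (n + 1), Kint n b e d • Kint n a d.1
      = ∑ d : Fin (n + 1), Kint n b e d • Kint n d.1 a := by
    refine Finset.sum_congr rfl (fun d _ => ?_)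
    rw [Kint_comm n a d.1]
  rw [lhs, rhs, triple n b a e he, triple n b e a ha, Finset.sum_comm]
  refine Finset.sum_congr rfl (fun i hi => ?_)
  refine Finset.sum_congr rfl (fun j hj => ?_)
  congr 1
  ring


lemma sum3_swap {α : Type*} [Fintype α] (f : α → α → α → ℤ) :
    ∑ d : α, ∑ b : α, ∑ e : α, f d b e
      = ∑ b : α, ∑ e : α, ∑ d : α, f d b e := by
  rw [Finset.sum_comm]
  exact Finset.sum_congr rfl (fun b _ => Finset.sum_comm)

lemma sum3_swap' {α : Type*} [Fintype α] (f : α → α → α → ℤ) :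
    ∑ d : α, ∑ e : α, ∑ b : α, f d e b
      = ∑ b : α, ∑ e : α, ∑ d : α, f d e b := by
  rw [Finset.sum_comm]
  rw [Finset.sum_congr rfl (fun e _ => Finset.sum_comm)]
  rw [Finset.sum_comm]

lemma sum4_swap {α : Type*} [Fintype α] (f : α → α → α → α → ℤ) :
    ∑ d : α, ∑ e : α, ∑ a : α, ∑ b : α, f d e a b
      = ∑ a : α, ∑ b : α, ∑ e : α, ∑ d : α, f d e a b := by
  calc ∑ d : α, ∑ e : α, ∑ a : α, ∑ b : α, f d e a b
      = ∑ d : α, ∑ a : α, ∑ e : α, ∑ b : α, f d e a b :=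
        Finset.sum_congr rfl (fun d _ => Finset.sum_comm)
    _ = ∑ a : α, ∑ d : α, ∑ e : α, ∑ b : α, f d e a b := Finset.sum_comm
    _ = ∑ a : α, ∑ b : α, ∑ e : α, ∑ d : α, f d e a b :=
        Finset.sum_congr rfl (fun a _ => sum3_swap' _)

lemma vmul_apply (n : ℕ) (x y : Fin (n + 1) → ℤ) (c : Fin (n + 1)) :
    vmul n x y c = ∑ a : Fin (n + 1), ∑ b : Fin (n + 1),
      x a * y b * Kint n a.1 b.1 c := by
  unfold vmul
  refine Finset.sum_congr rfl (fun a _ => Finset.sum_congr rfl (fun b _ => ?_))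
  congr 1
  rw [← ker_eq_Kint]
  rfl

lemma kassoc_pt (n a b e : ℕ) (ha : a ≤ n) (he : e ≤ n) (c : Fin (n + 1)) :
    ∑ d : Fin (n + 1), Kint n a b d * Kint n d.1 e c
      = ∑ d : Fin (n + 1), Kint n b e d * Kint n a d.1 c := by
  have h := congrFun (kassoc n a b e ha he) c
  simpa [Finset.sum_apply, Pi.smul_apply, smul_eq_mul] using h

lemma vmul_assoc (n : ℕ) (x y z : Fin (n + 1) → ℤ) :
    vmul n (vmul n x y) z = vmul n x (vmul n y z) := by
  funext c
  rw [vmul_apply, vmul_apply]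
  have lhs : ∑ d : Fin (n + 1), ∑ e : Fin (n + 1),
      vmul n x y d * z e * Kint n d.1 e.1 c
      = ∑ a : Fin (n + 1), ∑ b : Fin (n + 1), ∑ e : Fin (n + 1),
          x a * y b * z e * (∑ d : Fin (n + 1), Kint n a.1 b.1 d * Kint n d.1 e.1 c) := by
    have expand : ∀ d e : Fin (n + 1), vmul n x y d * z e * Kint n d.1 e.1 c
        = ∑ a : Fin (n + 1), ∑ b : Fin (n + 1),
            x a * y b * Kint n a.1 b.1 d * z e * Kint n d.1 e.1 c := by
      intro d e
      rw [vmul_apply, Finset.sum_mul, Finset.sum_mul]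
      exact Finset.sum_congr rfl (fun a _ => by
        rw [Finset.sum_mul, Finset.sum_mul])
    rw [Finset.sum_congr rfl (fun d _ => Finset.sum_congr rfl (fun e _ => expand d e))]
    rw [sum4_swap (fun d e a b => x a * y b * Kint n a.1 b.1 d * z e * Kint n d.1 e.1 c)]
    refine Finset.sum_congr rfl (fun a _ => Finset.sum_congr rfl (fun b _ =>
      Finset.sum_congr rfl (fun e _ => ?_)))
    rw [Finset.mul_sum]
    exact Finset.sum_congr rfl (fun d _ => by ring)
  have rhs : ∑ a : Fin (n + 1), ∑ d : Fin (n + 1),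
      x a * vmul n y z d * Kint n a.1 d.1 c
      = ∑ a : Fin (n + 1), ∑ b : Fin (n + 1), ∑ e : Fin (n + 1),
          x a * y b * z e * (∑ d : Fin (n + 1), Kint n b.1 e.1 d * Kint n a.1 d.1 c) := by
    refine Finset.sum_congr rfl (fun a _ => ?_)
    have expand : ∀ d : Fin (n + 1), x a * vmul n y z d * Kint n a.1 d.1 c
        = ∑ b : Fin (n + 1), ∑ e : Fin (n + 1),
            x a * (y b * z e * Kint n b.1 e.1 d) * Kint n a.1 d.1 c := by
      intro d
      rw [vmul_apply, Finset.mul_sum, Finset.sum_mul]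
      exact Finset.sum_congr rfl (fun b _ => by
        rw [Finset.mul_sum, Finset.sum_mul])
    rw [Finset.sum_congr rfl (fun d _ => expand d)]
    rw [sum3_swap (fun d b e => x a * (y b * z e * Kint n b.1 e.1 d) * Kint n a.1 d.1 c)]
    refine Finset.sum_congr rfl (fun b _ => Finset.sum_congr rfl (fun e _ => ?_))
    rw [Finset.mul_sum]
    exact Finset.sum_congr rfl (fun d _ => by ring)
  rw [lhs, rhs]
  refine Finset.sum_congr rfl (fun a _ => Finset.sum_congr rfl (fun b _ =>
    Finset.sum_congr rfl (fun e _ => ?_)))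
  rw [kassoc_pt n a.1 b.1 e.1 (by omega) (by omega) c]


lemma vmul_comm (n : ℕ) (x y : Fin (n + 1) → ℤ) : vmul n x y = vmul n y x := by
  funext c
  rw [vmul_apply, vmul_apply, Finset.sum_comm]
  refine Finset.sum_congr rfl (fun a _ => Finset.sum_congr rfl (fun b _ => ?_))
  rw [← ker_eq_Kint, ← ker_eq_Kint, ker_comm]
  ring

lemma eN_zero (n : ℕ) : eN n 0 = Pi.single (0 : Fin (n + 1)) 1 := by
  unfold eN
  rw [dif_pos (Nat.zero_le n)]
  rfl

lemma Kint_zero_left (n b : ℕ) (hb : b ≤ n) :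
    Kint n 0 b = Pi.single (⟨b, by omega⟩ : Fin (n + 1)) 1 := by
  rw [← ker_eq_Kint, ker_comm]
  unfold ker
  rw [Nat.min_eq_right (Nat.zero_le b), Finset.sum_range_one]
  unfold foldA2
  rw [dif_pos (show (b + 0 - 2 * 0) % (2 * n + 3) ≤ n by
    rw [Nat.mod_eq_of_lt (by omega)]; omega)]
  have hX : (b + 0 - 2 * 0) % (2 * n + 3) = b := by
    rw [show b + 0 - 2 * 0 = b from by omega]
    exact Nat.mod_eq_of_lt (by omega)
  simp only [hX]

lemma vmul_one_left (n : ℕ) (x : Fin (n + 1) → ℤ) : vmul n (eN n 0) x = x := by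
  funext c
  rw [vmul_apply, eN_zero]
  rw [Finset.sum_eq_single (0 : Fin (n + 1)) (fun a _ ha => by
    simp only [Pi.single_eq_of_ne ha]
    exact Finset.sum_eq_zero (fun b _ => by ring)) (by simp)]
  rw [Pi.single_eq_same]
  have hterm : ∀ b : Fin (n + 1),
      (1 : ℤ) * x b * Kint n (0 : Fin (n + 1)).1 b.1 c = x b * (Pi.single b 1 : Fin (n + 1) → ℤ) c := by
    intro b
    have h0 : ((0 : Fin (n + 1)).1 : ℕ) = 0 := rfl
    rw [h0, Kint_zero_left n b.1 (by omega)]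
    have hb2 : (⟨b.1, by omega⟩ : Fin (n + 1)) = b := Fin.ext rfl
    rw [hb2]
    ring
  rw [Finset.sum_congr rfl (fun b _ => hterm b)]
  rw [Finset.sum_eq_single c (fun b _ hb => by
    rw [Pi.single_eq_of_ne (Ne.symm hb), mul_zero]) (by simp)]
  rw [Pi.single_eq_same, mul_one]

lemma vmul_one_right (n : ℕ) (x : Fin (n + 1) → ℤ) : vmul n x (eN n 0) = x := by
  rw [vmul_comm]; exact vmul_one_left n x

lemma Nconst_eq (n : ℕ) (a b c : Fin (n + 1)) :
    Nconst n a.1 b.1 c.1 = ker n a.1 b.1 c := by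
  unfold Nconst
  rw [dif_pos (show c.1 ≤ n by omega)]
  have hc : (⟨c.1, by omega⟩ : Fin (n + 1)) = c := Fin.ext rfl
  rw [hc]
  have hea : eN n a.1 = Pi.single a 1 := by
    unfold eN
    rw [dif_pos (show a.1 ≤ n by omega)]
  have heb : eN n b.1 = Pi.single b 1 := by
    unfold eN
    rw [dif_pos (show b.1 ≤ n by omega)]
  rw [vmul_apply, hea, heb]
  rw [Finset.sum_eq_single a (fun a' _ ha' => by
    rw [Pi.single_eq_of_ne ha']
    exact Finset.sum_eq_zero (fun b' _ => by ring)) (by simp)]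
  rw [Finset.sum_eq_single b (fun b' _ hb' => by
    rw [Pi.single_eq_of_ne hb']; ring) (by simp)]
  rw [Pi.single_eq_same, Pi.single_eq_same, ker_eq_Kint]
  ring


lemma term_sign (n a b i : ℕ) (ha : a ≤ n) (hb : b ≤ n) (hi : i ≤ min a b)
    (c : Fin (n + 1)) :
    foldA2 n (a + b - 2 * i) c
      = (-1 : ℤ) ^ (a + b + c.1) * |foldA2 n (a + b - 2 * i) c| := by
  have hm2 : a + b - 2 * i ≤ 2 * n := by omega
  have hmod : (a + b - 2 * i) % (2 * n + 3) = a + b - 2 * i :=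
    Nat.mod_eq_of_lt (by omega)
  unfold foldA2
  simp only [hmod]
  rcases le_or_gt (a + b - 2 * i) n with h1 | h1
  · rw [dif_pos h1, Pi.single_apply]
    rcases eq_or_ne c (⟨a + b - 2 * i, by omega⟩ : Fin (n + 1)) with hc | hc
    · rw [if_pos hc]
      have hc1 : c.1 = a + b - 2 * i := by rw [hc]
      have heven : (a + b + c.1) % 2 = 0 := by omega
      rw [Even.neg_one_pow (Nat.even_iff.mpr heven)]
      norm_num
    · rw [if_neg hc]
      norm_num
  · rw [dif_neg (by omega), dif_neg (by omega)]
    simp only [Pi.neg_apply, Pi.single_apply]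
    rcases eq_or_ne c (⟨2 * n + 1 - (a + b - 2 * i), by omega⟩ : Fin (n + 1)) with hc | hc
    · rw [if_pos hc]
      have hc1 : c.1 = 2 * n + 1 - (a + b - 2 * i) := by rw [hc]
      have hodd : (a + b + c.1) % 2 = 1 := by omega
      rw [Odd.neg_one_pow (Nat.odd_iff.mpr hodd)]
      norm_num
    · rw [if_neg hc]
      norm_num

lemma Nconst_abs (n : ℕ) (a b c : Fin (n + 1)) :
    |Nconst n a.1 b.1 c.1| = (-1 : ℤ) ^ (a.1 + b.1 + c.1) * Nconst n a.1 b.1 c.1 := by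
  rw [Nconst_eq]
  set σ : ℤ := (-1) ^ (a.1 + b.1 + c.1) with hσ
  have hσ2 : σ * σ = 1 := by
    rw [hσ, ← pow_add]
    exact Even.neg_one_pow ⟨a.1 + b.1 + c.1, rfl⟩
  have hσabs : |σ| = 1 := by
    rw [hσ, abs_pow, abs_neg, abs_one, one_pow]
  have hterm : ∀ i ∈ Finset.range (min a.1 b.1 + 1),
      foldA2 n (a.1 + b.1 - 2 * i) c = σ * |foldA2 n (a.1 + b.1 - 2 * i) c| := by
    intro i hi
    rw [Finset.mem_range] at hi
    exact term_sign n a.1 b.1 i (by omega) (by omega) (by omega) c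
  have hker : ker n a.1 b.1 c
      = σ * ∑ i ∈ Finset.range (min a.1 b.1 + 1), |foldA2 n (a.1 + b.1 - 2 * i) c| := by
    unfold ker
    rw [Finset.sum_apply, Finset.sum_congr rfl hterm, ← Finset.mul_sum]
  have hA : 0 ≤ ∑ i ∈ Finset.range (min a.1 b.1 + 1), |foldA2 n (a.1 + b.1 - 2 * i) c| :=
    Finset.sum_nonneg (fun i _ => abs_nonneg _)
  rw [hker, abs_mul, hσabs, abs_of_nonneg hA, ← mul_assoc, hσ2, one_mul]

/-- diagonal sign twist -/
def Tw (n : ℕ) (x : Fin (n + 1) → ℤ) : Fin (n + 1) → ℤ :=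
  fun d => (-1) ^ d.1 * x d

lemma Tw_Tw (n : ℕ) (x : Fin (n + 1) → ℤ) : Tw n (Tw n x) = x := by
  funext d
  unfold Tw
  rw [← mul_assoc, ← pow_add, Even.neg_one_pow ⟨d.1, rfl⟩, one_mul]

lemma Tw_e0 (n : ℕ) : Tw n (eN n 0) = eN n 0 := by
  rw [eN_zero]
  funext d
  unfold Tw
  by_cases hd : d = (0 : Fin (n + 1))
  · subst hd
    norm_num
  · rw [Pi.single_eq_of_ne hd, mul_zero]

lemma vmulAbs_eq (n : ℕ) (x y : Fin (n + 1) → ℤ) :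
    vmulAbs n x y = Tw n (vmul n (Tw n x) (Tw n y)) := by
  funext c
  show _ = (-1 : ℤ) ^ c.1 * vmul n (Tw n x) (Tw n y) c
  rw [vmul_apply, Finset.mul_sum]
  unfold vmulAbs
  refine Finset.sum_congr rfl (fun a _ => ?_)
  rw [Finset.mul_sum]
  refine Finset.sum_congr rfl (fun b _ => ?_)
  rw [Nconst_abs]
  have hk : Nconst n a.1 b.1 c.1 = Kint n a.1 b.1 c := by
    rw [Nconst_eq, ker_eq_Kint]
  rw [hk]
  show x a * y b * ((-1 : ℤ) ^ (a.1 + b.1 + c.1) * Kint n a.1 b.1 c)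
    = (-1 : ℤ) ^ c.1 * ((-1) ^ a.1 * x a * ((-1) ^ b.1 * y b) * Kint n a.1 b.1 c)
  rw [pow_add, pow_add]
  ring

end VerlA2

open VerlA2 in
/-- Replacing each structure constant of the Verlinde algebra of type `A₂⁽²⁾` at
level `2n` by its absolute value again yields a commutative associative product
with identity `e₀`. -/
theorem vmulAbs_comm_assoc_unital (n : ℕ) (hn : 1 ≤ n) :
    (∀ x y : Fin (n + 1) → ℤ, vmulAbs n x y = vmulAbs n y x) ∧
    (∀ x y z : Fin (n + 1) → ℤ,
      vmulAbs n (vmulAbs n x y) z = vmulAbs n x (vmulAbs n y z)) ∧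
    (∀ x : Fin (n + 1) → ℤ, vmulAbs n (eN n 0) x = x) ∧
    (∀ x : Fin (n + 1) → ℤ, vmulAbs n x (eN n 0) = x) := by
  refine ⟨?_, ?_, ?_, ?_⟩
  · intro x y
    rw [vmulAbs_eq, vmulAbs_eq, vmul_comm]
  · intro x y z
    rw [vmulAbs_eq n (vmulAbs n x y) z, vmulAbs_eq n x y, Tw_Tw,
      vmulAbs_eq n x (vmulAbs n y z), vmulAbs_eq n y z, Tw_Tw, vmul_assoc]
  · intro x
    rw [vmulAbs_eq, Tw_e0, vmul_one_left, Tw_Tw]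
  · intro x
    rw [vmulAbs_eq, Tw_e0, vmul_one_right, Tw_Tw]
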